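/- arXiv:1309.5582 — 2 statements merged into one kernel-verified Lean document; each statement's English description precedes it below -/
import Mathlib

section
/- (Deterministic core of the main theorem.) Let G = (ZMod 2)^n with n ≥ 1 and let A ⊆ G. Suppose that for every nonempty S ⊆ {1,…,n} the Fourier coefficient of the indicator of A satisfies |1̂_A(S)| ≤ (4/|G|)·√(ln(|G|)·|A|). Then for all subsets B, C ⊆ G, μ(A,B,C) ≤ |A||B||C|/|G| + 4·√(ln(|G|)·|A|·|B|·|C|). -/
open Finset

/-- The character `χ_S` of `(ZMod 2)^n` associated to `S ⊆ {1,…,n}`. -/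
noncomputable def chi (n : ℕ) (S : Finset (Fin n)) (x : Fin n → ZMod 2) : ℝ :=
  (-1 : ℝ) ^ (∑ i ∈ S, (x i).val)

/-- The Fourier coefficient `f̂(S) = (1/|G|) Σ_x f(x) χ_S(x)`. -/
noncomputable def fhat (n : ℕ) (f : (Fin n → ZMod 2) → ℝ) (S : Finset (Fin n)) : ℝ :=
  (∑ x : Fin n → ZMod 2, f x * chi n S x) / (2 ^ n : ℝ)

/-- The indicator function of a subset. -/
def ind {n : ℕ} (A : Finset (Fin n → ZMod 2)) : (Fin n → ZMod 2) → ℝ :=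
  fun x => if x ∈ A then 1 else 0

/-- `μ(A,B,C) = |{(a,b,c) ∈ A × B × C : a = b + c}|`. -/
def mu {n : ℕ} (A B C : Finset (Fin n → ZMod 2)) : ℕ :=
  ((A ×ˢ B ×ˢ C).filter (fun p => p.1 = p.2.1 + p.2.2)).card

lemma chi_eq_prod (n : ℕ) (S : Finset (Fin n)) (x : Fin n → ZMod 2) :
    chi n S x = ∏ i ∈ S, (-1:ℝ) ^ (x i).val := by
  rw [chi, ← Finset.prod_pow_eq_pow_sum]

lemma neg_one_pow_val_add (a b : ZMod 2) :
    (-1:ℝ)^((a+b).val) = (-1)^a.val * (-1)^b.val := by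
  rcases (show ∀ a : ZMod 2, a = 0 ∨ a = 1 by decide) a with rfl | rfl <;> rcases (show ∀ a : ZMod 2, a = 0 ∨ a = 1 by decide) b with rfl | rfl <;> norm_num [show ZMod.val (2:ZMod 2) = 0 from rfl, show ZMod.val (1:ZMod 2) = 1 from rfl, show (1 + 1 : ZMod 2) = 0 from rfl]

lemma chi_add (n : ℕ) (S : Finset (Fin n)) (x y : Fin n → ZMod 2) :
    chi n S (x + y) = chi n S x * chi n S y := by
  simp only [chi_eq_prod, ← Finset.prod_mul_distrib]
  exact Finset.prod_congr rfl fun i _ => neg_one_pow_val_add (x i) (y i)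

lemma sum_chi (n : ℕ) (z : Fin n → ZMod 2) :
    ∑ S : Finset (Fin n), chi n S z = if z = 0 then (2^n : ℝ) else 0 := by
  have h := Finset.prod_add (fun i => (-1:ℝ) ^ (z i).val) (fun _ => (1:ℝ)) Finset.univ
  simp only [Finset.prod_const_one, mul_one, Finset.powerset_univ] at h
  simp only [chi_eq_prod]
  rw [← h]
  by_cases hz : z = 0
  · subst hz
    simp only [if_pos rfl, Pi.zero_apply, ZMod.val_zero, pow_zero]
    norm_num
  · obtain ⟨i, hi⟩ : ∃ i, z i ≠ 0 := by
      by_contra hc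
      push_neg at hc
      exact hz (funext hc)
    have hzi : z i = 1 := by
      rcases (show ∀ a : ZMod 2, a = 0 ∨ a = 1 by decide) (z i) with h1 | h1
      · exact absurd h1 hi
      · exact h1
    rw [if_neg hz]
    refine Finset.prod_eq_zero (Finset.mem_univ i) ?_
    rw [hzi]
    norm_num [show ZMod.val (1:ZMod 2) = 1 from rfl]

lemma pi_add_eq_zero_iff {n : ℕ} (x y : Fin n → ZMod 2) : x + y = 0 ↔ x = y := by
  constructor
  · intro h
    funext i
    have := congrFun h i
    simp only [Pi.add_apply, Pi.zero_apply] at this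
    rcases (show ∀ a b : ZMod 2, a + b = 0 → a = b by decide) _ _ this with h1
    exact h1
  · rintro rfl
    funext i
    exact CharTwo.add_self_eq_zero (x i)

lemma inversion (n : ℕ) (f : (Fin n → ZMod 2) → ℝ) (x : Fin n → ZMod 2) :
    ∑ S : Finset (Fin n), fhat n f S * chi n S x = f x := by
  have h2n : (2:ℝ)^n ≠ 0 := by positivity
  simp only [fhat, div_mul_eq_mul_div, Finset.sum_div, Finset.sum_mul]
  rw [Finset.sum_comm]
  have : ∀ y : Fin n → ZMod 2, ∑ S : Finset (Fin n), f y * chi n S y * chi n S x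
      = f y * (if y = x then (2^n : ℝ) else 0) := by
    intro y
    simp only [mul_assoc]
    rw [← Finset.mul_sum]
    congr 1
    calc ∑ S : Finset (Fin n), chi n S y * chi n S x
        = ∑ S : Finset (Fin n), chi n S (y + x) := by
          exact Finset.sum_congr rfl fun S _ => (chi_add n S y x).symm
      _ = if y + x = 0 then (2^n : ℝ) else 0 := sum_chi n (y + x)
      _ = if y = x then (2^n : ℝ) else 0 := if_congr (pi_add_eq_zero_iff y x) rfl rfl
  simp only [← Finset.sum_div]
  rw [Finset.sum_congr rfl (fun y _ => this y)]
  simp only [mul_ite, mul_zero]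
  rw [Finset.sum_ite_eq' Finset.univ x (fun y => f y * 2^n)]
  simp [mul_div_assoc, h2n]

lemma parseval (n : ℕ) (B : Finset (Fin n → ZMod 2)) :
    ∑ S : Finset (Fin n), (∑ b ∈ B, chi n S b)^2 = (2^n : ℝ) * B.card := by
  have : ∀ S : Finset (Fin n), (∑ b ∈ B, chi n S b)^2
      = ∑ b ∈ B, ∑ b' ∈ B, chi n S (b + b') := by
    intro S
    rw [sq, Finset.sum_mul_sum]
    exact Finset.sum_congr rfl fun b _ => Finset.sum_congr rfl fun b' _ =>
      (chi_add n S b b').symm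
  simp only [this]
  rw [Finset.sum_comm]
  have : ∀ b : Fin n → ZMod 2, b ∈ B → (∑ S : Finset (Fin n), ∑ b' ∈ B, chi n S (b + b'))
      = (2^n : ℝ) := by
    intro b hb
    rw [Finset.sum_comm]
    have : ∀ b' : Fin n → ZMod 2, ∑ S : Finset (Fin n), chi n S (b + b')
        = if b = b' then (2^n:ℝ) else 0 := by
      intro b'
      rw [sum_chi]
      exact if_congr (pi_add_eq_zero_iff b b') rfl rfl
    simp only [this]
    rw [Finset.sum_ite_eq B b (fun _ => (2^n:ℝ))]
    simp [hb]
  rw [Finset.sum_congr rfl this, Finset.sum_const, nsmul_eq_mul, mul_comm]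

lemma chi_empty (n : ℕ) (x : Fin n → ZMod 2) : chi n ∅ x = 1 := by
  simp [chi]

lemma sum_ind {n : ℕ} (A : Finset (Fin n → ZMod 2)) :
    ∑ x : Fin n → ZMod 2, ind A x = A.card := by
  simp [ind]

theorem stmt2 (n : ℕ) (hn : 1 ≤ n) (A : Finset (Fin n → ZMod 2))
    (hA : ∀ S : Finset (Fin n), S ≠ ∅ →
      |fhat n (ind A) S| ≤ (4 / (2 ^ n : ℝ)) * Real.sqrt (Real.log (2 ^ n) * A.card)) :
    ∀ B C : Finset (Fin n → ZMod 2),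
      (mu A B C : ℝ) ≤ (A.card : ℝ) * B.card * C.card / (2 ^ n : ℝ) +
        4 * Real.sqrt (Real.log (2 ^ n) * A.card * B.card * C.card) := by
  intro B C
  have h2n : (0:ℝ) < 2^n := by positivity
  set u : Finset (Fin n) → ℝ := fun S => ∑ b ∈ B, chi n S b with hu
  set v : Finset (Fin n) → ℝ := fun S => ∑ c ∈ C, chi n S c with hv
  set ε : ℝ := (4 / (2 ^ n : ℝ)) * Real.sqrt (Real.log (2 ^ n) * A.card) with hε
  have hεnn : 0 ≤ ε := by positivity
  -- mu as a double sum
  have hmu : (mu A B C : ℝ) = ∑ b ∈ B, ∑ c ∈ C, ind A (b + c) := by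
    rw [mu, Finset.card_filter]
    push_cast
    rw [Finset.sum_product]
    simp only [Finset.sum_product]
    rw [Finset.sum_comm]
    refine Finset.sum_congr rfl fun b _ => ?_
    rw [Finset.sum_comm]
    refine Finset.sum_congr rfl fun c _ => ?_
    rw [Finset.sum_ite_eq' A (b + c) (fun _ => (1:ℝ))]
    simp [ind]
  -- Fourier expansion of mu
  have hstep : (mu A B C : ℝ)
      = ∑ S : Finset (Fin n), fhat n (ind A) S * (u S * v S) := by
    rw [hmu]
    have : ∀ S : Finset (Fin n), fhat n (ind A) S * (u S * v S)
        = ∑ b ∈ B, ∑ c ∈ C, fhat n (ind A) S * (chi n S b * chi n S c) := by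
      intro S
      rw [hu, hv, Finset.sum_mul_sum]
      simp only [Finset.mul_sum]
    calc ∑ b ∈ B, ∑ c ∈ C, ind A (b + c)
        = ∑ b ∈ B, ∑ c ∈ C, ∑ S : Finset (Fin n),
            fhat n (ind A) S * (chi n S b * chi n S c) := by
          refine Finset.sum_congr rfl fun b _ => Finset.sum_congr rfl fun c _ => ?_
          rw [← inversion n (ind A) (b + c)]
          exact Finset.sum_congr rfl fun S _ => by rw [chi_add]
      _ = ∑ b ∈ B, ∑ S : Finset (Fin n), ∑ c ∈ C,
            fhat n (ind A) S * (chi n S b * chi n S c) :=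
          Finset.sum_congr rfl fun b _ => Finset.sum_comm
      _ = ∑ S : Finset (Fin n), ∑ b ∈ B, ∑ c ∈ C,
            fhat n (ind A) S * (chi n S b * chi n S c) := Finset.sum_comm
      _ = ∑ S : Finset (Fin n), fhat n (ind A) S * (u S * v S) :=
          Finset.sum_congr rfl fun S _ => (this S).symm
  -- split off the empty set
  have hsplit : (mu A B C : ℝ)
      = (A.card : ℝ) * B.card * C.card / (2 ^ n : ℝ)
        + ∑ S ∈ Finset.univ.erase ∅, fhat n (ind A) S * (u S * v S) := by
    rw [hstep, ← Finset.add_sum_erase Finset.univ _ (Finset.mem_univ (∅ : Finset (Fin n)))]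
    congr 1
    have h1 : fhat n (ind A) ∅ = (A.card : ℝ) / (2^n : ℝ) := by
      rw [fhat]
      simp only [chi_empty, mul_one, sum_ind]
    have h2 : u ∅ = B.card := by simp [hu, chi_empty]
    have h3 : v ∅ = C.card := by simp [hv, chi_empty]
    rw [h1, h2, h3]
    ring
  -- bound the error term
  have herr : |∑ S ∈ Finset.univ.erase ∅, fhat n (ind A) S * (u S * v S)|
      ≤ ε * ∑ S : Finset (Fin n), |u S| * |v S| := by
    calc |∑ S ∈ Finset.univ.erase ∅, fhat n (ind A) S * (u S * v S)|
        ≤ ∑ S ∈ Finset.univ.erase ∅, |fhat n (ind A) S * (u S * v S)| :=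
          Finset.abs_sum_le_sum_abs _ _
      _ ≤ ∑ S ∈ Finset.univ.erase ∅, ε * (|u S| * |v S|) := by
          refine Finset.sum_le_sum fun S hS => ?_
          rw [abs_mul, abs_mul]
          have hSne : S ≠ ∅ := (Finset.mem_erase.mp hS).1
          exact mul_le_mul_of_nonneg_right (hA S hSne) (by positivity)
      _ ≤ ∑ S : Finset (Fin n), ε * (|u S| * |v S|) :=
          Finset.sum_le_sum_of_subset_of_nonneg (Finset.erase_subset _ _)
            (fun S _ _ => by positivity)
      _ = ε * ∑ S : Finset (Fin n), |u S| * |v S| := by rw [Finset.mul_sum]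
  -- Cauchy-Schwarz
  have hcs : ∑ S : Finset (Fin n), |u S| * |v S|
      ≤ Real.sqrt ((2^n : ℝ) * B.card) * Real.sqrt ((2^n : ℝ) * C.card) := by
    have h := Finset.sum_mul_sq_le_sq_mul_sq Finset.univ (fun S => |u S|) (fun S => |v S|)
    simp only [sq_abs] at h
    have hB := parseval n B
    have hC := parseval n C
    calc ∑ S : Finset (Fin n), |u S| * |v S|
        = Real.sqrt ((∑ S : Finset (Fin n), |u S| * |v S|)^2) := by
          rw [Real.sqrt_sq (by positivity)]
      _ ≤ Real.sqrt ((∑ S : Finset (Fin n), (u S)^2) * ∑ S : Finset (Fin n), (v S)^2) :=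
          Real.sqrt_le_sqrt h
      _ = Real.sqrt ((2^n : ℝ) * B.card) * Real.sqrt ((2^n : ℝ) * C.card) := by
          rw [hB, hC, Real.sqrt_mul (by positivity)]
  -- final algebra
  have hL : (0:ℝ) ≤ Real.log (2^n) := Real.log_nonneg (one_le_pow₀ one_le_two)
  have hfinal : ε * (Real.sqrt ((2^n : ℝ) * B.card) * Real.sqrt ((2^n : ℝ) * C.card))
      = 4 * Real.sqrt (Real.log (2 ^ n) * A.card * B.card * C.card) := by
    rw [hε, Real.sqrt_mul h2n.le (B.card : ℝ), Real.sqrt_mul h2n.le (C.card : ℝ),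
      Real.sqrt_mul (by positivity : (0:ℝ) ≤ Real.log (2^n) * A.card * B.card) (C.card : ℝ),
      Real.sqrt_mul (by positivity : (0:ℝ) ≤ Real.log (2^n) * A.card) (B.card : ℝ)]
    have e2 : Real.sqrt ((2:ℝ)^n) * Real.sqrt ((2:ℝ)^n) = 2^n :=
      Real.mul_self_sqrt h2n.le
    have e3 : 4 / (2^n : ℝ) * Real.sqrt (Real.log (2 ^ n) * A.card)
          * (Real.sqrt ((2:ℝ)^n) * Real.sqrt (B.card : ℝ)
            * (Real.sqrt ((2:ℝ)^n) * Real.sqrt (C.card : ℝ)))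
        = 4 / (2^n : ℝ) * (Real.sqrt ((2:ℝ)^n) * Real.sqrt ((2:ℝ)^n))
          * (Real.sqrt (Real.log (2 ^ n) * A.card) * Real.sqrt (B.card : ℝ)
            * Real.sqrt (C.card : ℝ)) := by ring
    rw [e3, e2]
    field_simp
  calc (mu A B C : ℝ)
      ≤ (A.card : ℝ) * B.card * C.card / (2 ^ n : ℝ)
        + |∑ S ∈ Finset.univ.erase ∅, fhat n (ind A) S * (u S * v S)| := by
        rw [hsplit]; gcongr; exact le_abs_self _
    _ ≤ (A.card : ℝ) * B.card * C.card / (2 ^ n : ℝ)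
        + ε * (Real.sqrt ((2^n : ℝ) * B.card) * Real.sqrt ((2^n : ℝ) * C.card)) := by
        gcongr
        exact herr.trans (mul_le_mul_of_nonneg_left hcs hεnn)
    _ = _ := by rw [hfinal]
end

section
/- For every ε > 0 there exist a constant K and an integer N such that for every finite abelian group G with |G| ≥ N and every m with 0 ≤ m ≤ |G|, the number of subsets A ⊆ G with |A| = m for which some non-principal character χ of G satisfies |(1/|G|) Σ_{x∈G} 1_A(x) χ(x)| > (2/|G|)·√(2(1+ε)·ln(|G|)·m′) is at most K·|G|^{−ε}·C(|G|, m), where m′ = min(m, |G| − m) and C(|G|, m) is the number of m-element subsets of G. (Hayes's theorem on the maximum non-principal Fourier coefficient of a random set.) -/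
set_option maxHeartbeats 1000000


open Finset
open Real

/-- The Fourier coefficient of the indicator of `A ⊆ G` at a character `χ : G → Circle`:
`(1/|G|) Σ_{x∈G} 1_A(x) χ(x)`. -/
noncomputable def fourierCoeffOfSet (G : Type*) [AddCommGroup G] [Fintype G] [DecidableEq G]
    (A : Finset G) (χ : AddChar G Circle) : ℂ :=
  (∑ x : G, (if x ∈ A then (1 : ℂ) else 0) * χ x) / (Fintype.card G : ℂ)




lemma exp_quad {x : ℝ} (hx : |x| ≤ 1/2) : Real.exp x ≤ 1 + x + (11/18) * x^2 := by
  have h1 : |x| ≤ 1 := hx.trans (by norm_num)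
  have := Real.exp_bound h1 (by norm_num : (0:ℕ) < 3)
  have hs : ∑ i ∈ Finset.range 3, x ^ i / i.factorial = 1 + x + x^2/2 := by
    norm_num [Finset.sum_range_succ, Nat.factorial]
  rw [hs] at this
  have h2 : Real.exp x - (1 + x + x^2/2) ≤ |x|^3 * (2/9) := by
    have := (abs_le.1 this).2
    refine this.trans_eq ?_
    norm_num [Nat.factorial]
  have h3 : |x|^3 ≤ (1/2) * x^2 := by
    have : |x|^3 = |x| * x^2 := by rw [pow_succ, sq_abs]; ring
    rw [this]
    nlinarith [sq_nonneg x]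
  nlinarith

noncomputable def omg (j : Fin 8) : ℂ := Complex.exp ((((j : ℕ) * (π/4) : ℝ) : ℂ) * Complex.I)

lemma net8 (z : ℂ) : ∃ j : Fin 8,
    ‖z‖ * Real.cos (π/8) ≤ ((starRingEnd ℂ) (omg j) * z).re := by
  by_cases hz : z = 0
  · refine ⟨0, by simp [hz]⟩
  have hπ : (0:ℝ) < π := Real.pi_pos
  set θ := Complex.arg z with hθdef
  have hθ1 : -π < θ := Complex.neg_pi_lt_arg z
  have hθ2 : θ ≤ π := Complex.arg_le_pi z
  set k : ℤ := round (θ / (π/4)) with hk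
  have hround : |θ / (π/4) - k| ≤ 1/2 := abs_sub_round _
  have h4 : (0:ℝ) < π/4 := by linarith
  have hdelta : |θ - k * (π/4)| ≤ π/8 := by
    have h1 : |θ / (π/4) - k| * (π/4) ≤ (1/2) * (π/4) :=
      mul_le_mul_of_nonneg_right hround h4.le
    calc |θ - k*(π/4)| = |(θ/(π/4) - k) * (π/4)| := by
          rw [sub_mul, div_mul_cancel₀ _ h4.ne']
      _ = |θ/(π/4) - k| * (π/4) := by rw [abs_mul, abs_of_pos h4]
      _ ≤ (1/2) * (π/4) := h1
      _ = π/8 := by ring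
  have hkb : -4 ≤ k ∧ k ≤ 4 := by
    have habs : |θ| ≤ π := abs_le.2 ⟨hθ1.le, hθ2⟩
    have h1 : |θ / (π/4)| ≤ 4 := by
      rw [abs_div, abs_of_pos h4, div_le_iff₀ h4]
      linarith
    have h2 : |(k:ℝ)| ≤ 4 + 1/2 := by
      calc |(k:ℝ)| = |(θ/(π/4) - (θ/(π/4) - k))| := by norm_num
        _ ≤ |θ/(π/4)| + |θ/(π/4) - k| := abs_sub _ _
        _ ≤ 4 + 1/2 := add_le_add h1 hround
    constructor
    · have : (-(4:ℝ) - 1/2) ≤ (k:ℝ) := by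
        have := (abs_le.1 h2).1; linarith
      have h5 : ((-5 : ℤ) : ℝ) < (k:ℝ) := by push_cast; linarith
      have : (-5 : ℤ) < k := by exact_mod_cast h5
      omega
    · have : (k:ℝ) ≤ 4 + 1/2 := (abs_le.1 h2).2
      have h5 : (k:ℝ) < ((5:ℤ):ℝ) := by push_cast; linarith
      have : k < (5:ℤ) := by exact_mod_cast h5
      omega
  have hmod1 : 0 ≤ k % 8 := Int.emod_nonneg k (by norm_num)
  have hmod2 : k % 8 < 8 := Int.emod_lt_of_pos k (by norm_num)
  refine ⟨⟨(k % 8).toNat, by omega⟩, ?_⟩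
  have hjval : (((k % 8).toNat : ℕ) : ℝ) = (k : ℝ) - 8 * ((k / 8 : ℤ) : ℝ) := by
    have h1 : (((k % 8).toNat : ℕ) : ℤ) = k % 8 := Int.toNat_of_nonneg hmod1
    have h2 : k % 8 = k - 8 * (k / 8) := by rw [Int.emod_def]
    have : (((k % 8).toNat : ℕ) : ℤ) = k - 8 * (k / 8) := h1.trans h2
    exact_mod_cast congrArg (Int.cast : ℤ → ℝ) this
  have hexp : omg ⟨(k % 8).toNat, by omega⟩ = Complex.exp ((((k:ℝ) * (π/4) : ℝ) : ℂ) * Complex.I) := by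
    rw [omg, Complex.exp_eq_exp_iff_exists_int]
    refine ⟨-(k/8), ?_⟩
    push_cast [hjval]
    ring
  rw [hexp]
  have hconj : (starRingEnd ℂ) (Complex.exp ((((k:ℝ) * (π/4) : ℝ) : ℂ) * Complex.I))
      = Complex.exp (((-(k:ℝ) * (π/4) : ℝ) : ℂ) * Complex.I) := by
    rw [← Complex.exp_conj]
    congr 1
    simp only [map_mul, Complex.conj_ofReal, Complex.conj_I]
    push_cast
    ring
  rw [hconj]
  have hz' : ((‖z‖ : ℝ) : ℂ) * Complex.exp ((θ : ℝ) * Complex.I) = z :=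
    Complex.norm_mul_exp_arg_mul_I z
  have hprod : Complex.exp (((-(k:ℝ) * (π/4) : ℝ) : ℂ) * Complex.I) * z
      = ((‖z‖ : ℝ) : ℂ) * Complex.exp (((θ - k * (π/4) : ℝ) : ℂ) * Complex.I) := by
    conv_lhs => rw [← hz']
    rw [mul_comm, mul_assoc, ← Complex.exp_add]
    congr 2
    push_cast
    ring
  rw [hprod]
  rw [Complex.re_ofReal_mul, Complex.exp_ofReal_mul_I_re]
  have hcos : Real.cos (π/8) ≤ Real.cos (θ - k * (π/4)) := by
    rw [← Real.cos_abs (θ - k * (π/4))]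
    exact Real.cos_le_cos_of_nonneg_of_le_pi (abs_nonneg _) (by linarith) hdelta
  exact mul_le_mul_of_nonneg_left hcos (norm_nonneg z)



lemma modeNat (n m : ℕ) (hm : m ≤ n) (k : ℕ) :
    n.choose k * m^k * (n-m)^(n-k) ≤ n.choose m * m^m * (n-m)^(n-m) := by
  set f : ℕ → ℕ := fun k => n.choose k * m^k * (n-m)^(n-k) with hf
  have step_up : ∀ j, j < m → f j ≤ f (j+1) := by
    intro j hj
    have hjn : j < n := lt_of_lt_of_le hj hm
    obtain ⟨u, hu⟩ : ∃ u, n - j = u + 1 := ⟨n - j - 1, by omega⟩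
    have hu2 : n - (j+1) = u := by omega
    have key : (j+1) * f j ≤ (j+1) * f (j+1) := by
      simp only [hf, hu, hu2]
      calc (j+1) * (n.choose j * m^j * (n-m)^(u+1))
          = (n.choose j * ((j+1) * (n-m))) * (m^j * (n-m)^u) := by rw [pow_succ]; ring
        _ ≤ (n.choose j * (m * (n-j))) * (m^j * (n-m)^u) := by
            exact Nat.mul_le_mul_right _ (Nat.mul_le_mul_left _
              (Nat.mul_le_mul (by omega) (by omega)))
        _ = (n.choose (j+1) * (j+1)) * (m^(j+1) * (n-m)^u) := by
            rw [Nat.choose_succ_right_eq, pow_succ]; ring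
        _ = (j+1) * (n.choose (j+1) * m^(j+1) * (n-m)^u) := by ring
    exact Nat.le_of_mul_le_mul_left key (Nat.succ_pos j)
  have step_down : ∀ j, m ≤ j → f (j+1) ≤ f j := by
    intro j hj
    rcases le_or_gt n j with hn | hn
    · have : n.choose (j+1) = 0 := Nat.choose_eq_zero_of_lt (by omega)
      simp [hf, this]
    · obtain ⟨u, hu⟩ : ∃ u, n - j = u + 1 := ⟨n - j - 1, by omega⟩
      have hu2 : n - (j+1) = u := by omega
      have key : (j+1) * f (j+1) ≤ (j+1) * f j := by
        simp only [hf, hu, hu2]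
        calc (j+1) * (n.choose (j+1) * m^(j+1) * (n-m)^u)
            = (n.choose (j+1) * (j+1)) * (m^(j+1) * (n-m)^u) := by ring
          _ = (n.choose j * ((n-j) * m)) * (m^j * (n-m)^u) := by
              rw [Nat.choose_succ_right_eq, pow_succ]; ring
          _ ≤ (n.choose j * ((n-m) * (j+1))) * (m^j * (n-m)^u) := by
              exact Nat.mul_le_mul_right _ (Nat.mul_le_mul_left _
                (Nat.mul_le_mul (by omega) (by omega)))
          _ = (j+1) * (n.choose j * m^j * (n-m)^(u+1)) := by rw [pow_succ]; ring
      exact Nat.le_of_mul_le_mul_left key (Nat.succ_pos j)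
  rcases le_or_gt k m with hk | hk
  · have h : ∀ d, d ≤ m → f (m - d) ≤ f m := by
      intro d
      induction d with
      | zero => simp
      | succ d ih =>
        intro hd
        have h1 : f (m - (d+1)) ≤ f (m - d) := by
          have hlt : m - (d+1) < m := by omega
          have e : (m - (d+1)) + 1 = m - d := by omega
          have := step_up (m - (d+1)) hlt
          rwa [e] at this
        exact h1.trans (ih (by omega))
    have h2 := h (m - k) (by omega)
    have e : m - (m - k) = k := by omega
    rwa [e] at h2
  · have h : ∀ d, f (m + d) ≤ f m := by
      intro d
      induction d with
      | zero => simp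
      | succ d ih =>
        have h1 : f (m + d + 1) ≤ f (m + d) := step_down (m + d) (by omega)
        have e : m + (d+1) = m + d + 1 := by omega
        rw [e]
        exact h1.trans ih
    have h2 := h (k - m)
    have e : m + (k - m) = k := by omega
    rwa [e] at h2

lemma binom_mode (n m : ℕ) (hm : m ≤ n) (hn : 0 < n) :
    1 ≤ ((n:ℝ)+1) * n.choose m * ((m:ℝ)/n)^m * (1 - (m:ℝ)/n)^(n-m) := by
  set p : ℝ := (m:ℝ)/n with hp
  have hnR : (0:ℝ) < n := by exact_mod_cast hn
  have hq : 1 - p = ((n-m : ℕ):ℝ)/n := by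
    rw [hp, Nat.cast_sub hm]; field_simp
  have expand : ∀ j, j ≤ n → p^j * (1-p)^(n-j) * (n.choose j : ℝ)
      = ((n.choose j * m^j * (n-m)^(n-j) : ℕ) : ℝ) / (n:ℝ)^n := by
    intro j hj
    rw [hq, hp, div_pow, div_pow]
    push_cast
    rw [div_mul_div_comm, ← pow_add]
    have : j + (n - j) = n := by omega
    rw [this]
    ring
  have hterm : ∀ k ∈ Finset.range (n+1),
      p^k * (1-p)^(n-k) * (n.choose k : ℝ) ≤ p^m * (1-p)^(n-m) * (n.choose m : ℝ) := by
    intro k hk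
    have hkn : k ≤ n := Nat.lt_succ_iff.mp (Finset.mem_range.mp hk)
    rw [expand k hkn, expand m hm]
    exact div_le_div_of_nonneg_right (by exact_mod_cast modeNat n m hm k) (by positivity)
  have h1 : (1:ℝ) = ∑ k ∈ Finset.range (n+1), p^k * (1-p)^(n-k) * (n.choose k : ℝ) := by
    have := add_pow p (1-p) n
    have hsum : p + (1-p) = 1 := by ring
    rw [hsum, one_pow] at this
    exact this
  have h2 : (1:ℝ) ≤ (n+1) * (p^m * (1-p)^(n-m) * (n.choose m : ℝ)) := by
    calc (1:ℝ) = ∑ k ∈ Finset.range (n+1), p^k * (1-p)^(n-k) * (n.choose k : ℝ) := h1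
      _
        ≤ ∑ _k ∈ Finset.range (n+1), p^m * (1-p)^(n-m) * (n.choose m : ℝ) :=
          Finset.sum_le_sum hterm
      _ = (n+1) * (p^m * (1-p)^(n-m) * (n.choose m : ℝ)) := by
          rw [Finset.sum_const, Finset.card_range]
          push_cast
          ring
  calc (1:ℝ) ≤ (n+1) * (p^m * (1-p)^(n-m) * (n.choose m : ℝ)) := h2
    _ = ((n:ℝ)+1) * n.choose m * p^m * (1-p)^(n-m) := by ring

lemma chernoff_sum {G : Type*} [Fintype G] [DecidableEq G] (a : G → ℝ)
    (h1 : ∀ x, |a x| ≤ 1) (h0 : ∑ x, a x = 0) (p lam s : ℝ)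
    (hp0 : 0 ≤ p) (hp1 : p ≤ 1) (hlam0 : 0 ≤ lam) (hlam : lam ≤ 1/2) :
    ∑ A : Finset G, ((if s ≤ ∑ x ∈ A, a x then (1:ℝ) else 0) *
        (p ^ A.card * (1-p) ^ (Fintype.card G - A.card)))
      ≤ Real.exp (- lam * s + (11/18) * lam^2 * p * (Fintype.card G)) := by
  have hq0 : (0:ℝ) ≤ 1 - p := by linarith
  have hw : ∀ A : Finset G, (0:ℝ) ≤ p ^ A.card * (1-p) ^ (Fintype.card G - A.card) :=
    fun A => mul_nonneg (pow_nonneg hp0 _) (pow_nonneg hq0 _)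
  -- Step A: indicator ≤ exponential
  have stepA : ∀ A : Finset G,
      (if s ≤ ∑ x ∈ A, a x then (1:ℝ) else 0) *
        (p ^ A.card * (1-p) ^ (Fintype.card G - A.card))
      ≤ Real.exp (lam * ((∑ x ∈ A, a x) - s)) *
        (p ^ A.card * (1-p) ^ (Fintype.card G - A.card)) := by
    intro A
    apply mul_le_mul_of_nonneg_right _ (hw A)
    split_ifs with h
    · calc (1:ℝ) = Real.exp 0 := Real.exp_zero.symm
        _ ≤ Real.exp (lam * ((∑ x ∈ A, a x) - s)) :=
            Real.exp_le_exp.mpr (mul_nonneg hlam0 (by linarith))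
    · exact Real.exp_nonneg _
  -- Step B: product formula
  have stepB : ∑ A : Finset G, Real.exp (lam * ∑ x ∈ A, a x) *
        (p ^ A.card * (1-p) ^ (Fintype.card G - A.card))
      = ∏ x : G, (p * Real.exp (lam * a x) + (1 - p)) := by
    rw [Fintype.prod_add (fun x => p * Real.exp (lam * a x)) (fun _ => 1 - p)]
    apply Finset.sum_congr rfl
    intro A _
    rw [Finset.prod_mul_distrib, Finset.prod_const, Finset.prod_const,
      ← Real.exp_sum, Finset.card_compl, Finset.mul_sum]
    ring_nf
  -- Step C: factor bound
  have stepC : ∏ x : G, (p * Real.exp (lam * a x) + (1 - p))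
      ≤ Real.exp ((11/18) * lam^2 * p * (Fintype.card G)) := by
    have factor : ∀ x : G, p * Real.exp (lam * a x) + (1 - p)
        ≤ Real.exp (p * (lam * a x) + (11/18) * p * (lam * a x)^2) := by
      intro x
      have habs : |lam * a x| ≤ 1/2 := by
        rw [abs_mul, abs_of_nonneg hlam0]
        calc lam * |a x| ≤ (1/2) * 1 := by
              apply mul_le_mul hlam (h1 x) (abs_nonneg _) (by norm_num)
          _ = 1/2 := by norm_num
      have h2 : Real.exp (lam * a x) ≤ 1 + lam * a x + (11/18) * (lam * a x)^2 :=
        exp_quad habs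
      calc p * Real.exp (lam * a x) + (1 - p)
          ≤ p * (1 + lam * a x + (11/18) * (lam * a x)^2) + (1 - p) := by
            refine add_le_add ?_ le_rfl
            exact mul_le_mul_of_nonneg_left h2 hp0
        _ = 1 + (p * (lam * a x) + (11/18) * p * (lam * a x)^2) := by ring
        _ ≤ Real.exp (p * (lam * a x) + (11/18) * p * (lam * a x)^2) := by
            rw [add_comm]
            exact Real.add_one_le_exp _
    calc ∏ x : G, (p * Real.exp (lam * a x) + (1 - p))
        ≤ ∏ x : G, Real.exp (p * (lam * a x) + (11/18) * p * (lam * a x)^2) := by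
          apply Finset.prod_le_prod
          · intro x _
            have := Real.exp_nonneg (lam * a x)
            nlinarith
          · intro x _; exact factor x
      _ = Real.exp (∑ x : G, (p * (lam * a x) + (11/18) * p * (lam * a x)^2)) :=
          (Real.exp_sum _ _).symm
      _ ≤ Real.exp ((11/18) * lam^2 * p * (Fintype.card G)) := by
          apply Real.exp_le_exp.mpr
          rw [Finset.sum_add_distrib]
          have e1 : ∑ x : G, p * (lam * a x) = 0 := by
            rw [← Finset.mul_sum]
            have : ∑ x : G, lam * a x = lam * ∑ x : G, a x := by rw [Finset.mul_sum]
            rw [this, h0, mul_zero, mul_zero]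
          rw [e1, zero_add]
          calc ∑ x : G, (11/18) * p * (lam * a x)^2
              ≤ ∑ _x : G, (11/18) * p * lam^2 := by
                apply Finset.sum_le_sum
                intro x _
                have hax : (a x)^2 ≤ 1 := by
                  have := h1 x
                  nlinarith [abs_nonneg (a x), sq_abs (a x)]
                have : (lam * a x)^2 ≤ lam^2 := by
                  rw [mul_pow]
                  nlinarith [sq_nonneg lam]
                nlinarith [mul_nonneg (by norm_num : (0:ℝ) ≤ 11/18) hp0]
            _ = (11/18) * lam^2 * p * (Fintype.card G) := by
                rw [Finset.sum_const, Finset.card_univ]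
                simp [nsmul_eq_mul]
                ring
  -- combine
  calc ∑ A : Finset G, ((if s ≤ ∑ x ∈ A, a x then (1:ℝ) else 0) *
        (p ^ A.card * (1-p) ^ (Fintype.card G - A.card)))
      ≤ ∑ A : Finset G, Real.exp (lam * ((∑ x ∈ A, a x) - s)) *
        (p ^ A.card * (1-p) ^ (Fintype.card G - A.card)) :=
        Finset.sum_le_sum (fun A _ => stepA A)
    _ = Real.exp (- lam * s) * ∑ A : Finset G, Real.exp (lam * ∑ x ∈ A, a x) *
        (p ^ A.card * (1-p) ^ (Fintype.card G - A.card)) := by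
        rw [Finset.mul_sum]
        apply Finset.sum_congr rfl
        intro A _
        rw [mul_sub, sub_eq_add_neg, Real.exp_add, neg_mul]
        ring
    _ ≤ Real.exp (- lam * s) * Real.exp ((11/18) * lam^2 * p * (Fintype.card G)) := by
        apply mul_le_mul_of_nonneg_left _ (Real.exp_nonneg _)
        rw [stepB]
        exact stepC
    _ = Real.exp (- lam * s + (11/18) * lam^2 * p * (Fintype.card G)) :=
        (Real.exp_add _ _).symm





lemma expident (t m D ε c p n : ℝ) (hm : m ≠ 0)
    (ht2 : t^2 = 8*(1+ε)*D*m) (hpn : p * n = m) :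
    -(t/(2*m)) * (c * t) + (11/18)*(t/(2*m))^2*p*n = (1+ε)*D*(11/9 - 4*c) := by
  have h : (11/18)*(t/(2*m))^2*p*n = (11/18)*(t/(2*m))^2*(p*n) := by ring
  rw [h, hpn]
  field_simp
  linear_combination (99 - 324*c) * ht2

lemma mainlem {G : Type*} [AddCommGroup G] [Fintype G] [DecidableEq G] (ε : ℝ) (hε : 0 < ε)
    (m : ℕ) (hm2 : 2 * m ≤ Fintype.card G) :
    (Nat.card {A : Finset G // A.card = m ∧
        ∃ χ : AddChar G Circle, χ ≠ 1 ∧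
          (2 / (Fintype.card G : ℝ)) *
              Real.sqrt (2 * (1 + ε) * Real.log (Fintype.card G) *
                (min m (Fintype.card G - m))) <
            ‖fourierCoeffOfSet G A χ‖} : ℝ) ≤
      16 * (Fintype.card G : ℝ) ^ (-ε) * (Nat.choose (Fintype.card G) m) := by
  classical
  have hn : 0 < Fintype.card G := Fintype.card_pos
  set n := Fintype.card G with hn_def
  have hnR : (0:ℝ) < n := by exact_mod_cast hn
  have hmn : m ≤ n := by omega
  have hmnR : (m:ℝ) ≤ n := by exact_mod_cast hmn
  have hm2R : 2*(m:ℝ) ≤ n := by exact_mod_cast hm2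
  have hmin : min m (n - m) = m := min_eq_left (by omega)
  set D := Real.log n with hD_def
  have hD : 0 ≤ D := Real.log_nonneg (by exact_mod_cast hn)
  set t := 2 * Real.sqrt (2*(1+ε)*D*m) with ht_def
  have ht0 : 0 ≤ t := by positivity
  have hRHS : (0:ℝ) ≤ 16 * (n : ℝ) ^ (-ε) * (Nat.choose n m) := by positivity
  -- the predicate
  set pred := fun A : Finset G => A.card = m ∧
        ∃ χ : AddChar G Circle, χ ≠ 1 ∧
          (2 / (n : ℝ)) * Real.sqrt (2 * (1 + ε) * D * ((min m (n - m) : ℕ) : ℝ)) <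
            ‖fourierCoeffOfSet G A χ‖ with hpred
  have hcard_eq : (Nat.card {A : Finset G // pred A} : ℝ) =
      ((univ.filter pred).card : ℝ) := by
    rw [Nat.card_eq_fintype_card, Fintype.card_subtype]
  -- fourier coefficient as restricted sum
  have hfour : ∀ (A : Finset G) (χ : AddChar G Circle),
      ‖fourierCoeffOfSet G A χ‖
        = ‖∑ x ∈ A, ((χ x : ℂ))‖ / n := by
    intro A χ
    have e1 : (∑ x : G, (if x ∈ A then (1 : ℂ) else 0) * χ x) = ∑ x ∈ A, ((χ x : ℂ)) := by
      simp only [ite_mul, one_mul, zero_mul]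
      rw [Finset.sum_ite_mem, Finset.univ_inter]
    rw [fourierCoeffOfSet, e1, norm_div, Complex.norm_natCast]
  have habsS : ∀ (A : Finset G) (χ : AddChar G Circle),
      ‖∑ x ∈ A, ((χ x : ℂ))‖ ≤ A.card := by
    intro A χ
    calc ‖∑ x ∈ A, ((χ x : ℂ))‖ ≤ ∑ x ∈ A, ‖(χ x : ℂ)‖ :=
          norm_sum_le _ _
      _ = ∑ _x ∈ A, (1:ℝ) := by apply Finset.sum_congr rfl; intro x _; exact Circle.norm_coe _
      _ = A.card := by rw [Finset.sum_const, nsmul_eq_mul, mul_one]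
  -- threshold
  have hthresh : (2 / (n : ℝ)) * Real.sqrt (2 * (1 + ε) * D * ((min m (n - m) : ℕ) : ℝ)) = t / n := by
    rw [hmin, ht_def]; ring
  -- extract: pred A gives t < |S|
  have hextract : ∀ A : Finset G, pred A → A.card = m ∧
      ∃ χ : AddChar G Circle, χ ≠ 1 ∧ t < ‖∑ x ∈ A, ((χ x : ℂ))‖ := by
    intro A hA
    obtain ⟨hcard, χ, hχ, hlt⟩ := hA
    refine ⟨hcard, χ, hχ, ?_⟩
    rw [hthresh, hfour] at hlt
    exact (div_lt_div_iff_of_pos_right hnR).mp hlt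
  rcases le_or_gt (m:ℝ) t with hcase | hcase
  · -- bad set is empty
    have hempty : ∀ A : Finset G, ¬ pred A := by
      intro A hA
      obtain ⟨hcard, χ, hχ, hlt⟩ := hextract A hA
      have := habsS A χ
      rw [hcard] at this
      linarith
    have : IsEmpty {A : Finset G // pred A} := ⟨fun ⟨A, hA⟩ => hempty A hA⟩
    rw [Nat.card_of_isEmpty]
    simpa using hRHS
  · -- Chernoff case
    have hmR : (0:ℝ) < m := lt_of_le_of_lt ht0 hcase
    have hm0 : 0 < m := by exact_mod_cast hmR
    set p := (m:ℝ)/n with hp_def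
    have hp0 : 0 ≤ p := by positivity
    have hp1 : p ≤ 1 := by rw [hp_def, div_le_one hnR]; exact hmnR
    set lam := t/(2*m) with hlam_def
    have hlam0 : 0 ≤ lam := by positivity
    have hlam : lam ≤ 1/2 := by
      rw [hlam_def, div_le_iff₀ (by positivity)]
      linarith
    have hc1 : (29/36 : ℝ) ≤ Real.cos (π/8) := by
      rw [Real.cos_pi_div_eight]
      have h2 : (1:ℝ) ≤ Real.sqrt 2 := by
        rw [show (1:ℝ) = Real.sqrt 1 by simp]
        exact Real.sqrt_le_sqrt (by norm_num)
      have h3 : (29/18 : ℝ) ≤ Real.sqrt (2 + Real.sqrt 2) := by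
        rw [Real.le_sqrt' (by norm_num)]
        nlinarith
      linarith
    have hc0 : (0:ℝ) < Real.cos (π/8) := lt_of_lt_of_le (by norm_num) hc1
    set s := Real.cos (π/8) * t with hs_def
    set charset : Finset (AddChar G ℂ) := univ.filter (fun ψ => ψ ≠ 0) with hcharset
    set aa : AddChar G ℂ → Fin 8 → G → ℝ :=
      fun ψ j x => ((starRingEnd ℂ) (omg j) * ψ x).re with haa
    set w : Finset G → ℝ := fun A => p ^ A.card * (1-p) ^ (n - A.card) with hw
    have hw0 : ∀ A, 0 ≤ w A := fun A =>
      mul_nonneg (pow_nonneg hp0 _) (pow_nonneg (by linarith) _)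
    set ind : AddChar G ℂ → Fin 8 → Finset G → ℝ :=
      fun ψ j A => if s ≤ ∑ x ∈ A, aa ψ j x then (1:ℝ) else 0 with hind
    have hind0 : ∀ ψ j A, 0 ≤ ind ψ j A := by
      intro ψ j A
      rw [hind]
      dsimp only
      split_ifs <;> norm_num
    -- key: 1 ≤ inner double sum for A satisfying pred
    have hone : ∀ A : Finset G, pred A → (1:ℝ) ≤ ∑ ψ ∈ charset, ∑ j : Fin 8, ind ψ j A := by
      intro A hA
      obtain ⟨hcard, χ, hχ, hlt⟩ := hextract A hA
      set ψ := AddChar.circleEquivComplex χ with hψdef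
      have hψx : ∀ x : G, ψ x = (χ x : ℂ) := fun x => rfl
      have hψ0 : ψ ≠ 0 := by
        intro h
        apply hχ
        have h0 : (AddChar.circleEquivComplex (α := G)) 0 = 0 := map_zero _
        rw [← h0] at h
        have h2 := AddChar.circleEquivComplex.injective h
        rw [h2]
        rfl
      have hψmem : ψ ∈ charset := by rw [hcharset]; simp [hψ0]
      have hS : (∑ x ∈ A, ψ x) = ∑ x ∈ A, ((χ x : ℂ)) := by
        exact Finset.sum_congr rfl fun x _ => hψx x
      obtain ⟨j, hj⟩ := net8 (∑ x ∈ A, ψ x)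
      have hre : ((starRingEnd ℂ) (omg j) * ∑ x ∈ A, ψ x).re = ∑ x ∈ A, aa ψ j x := by
        rw [Finset.mul_sum, Complex.re_sum]
      have hjj : s ≤ ∑ x ∈ A, aa ψ j x := by
        rw [← hre]
        calc s = Real.cos (π/8) * t := hs_def
          _ ≤ Real.cos (π/8) * ‖∑ x ∈ A, ψ x‖ := by
              apply mul_le_mul_of_nonneg_left _ hc0.le
              rw [hS]
              exact hlt.le
          _ = ‖∑ x ∈ A, ψ x‖ * Real.cos (π/8) := mul_comm _ _
          _ ≤ ((starRingEnd ℂ) (omg j) * ∑ x ∈ A, ψ x).re := hj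
      have h1 : ind ψ j A = 1 := by rw [hind]; exact if_pos hjj
      calc (1:ℝ) = ind ψ j A := h1.symm
        _ ≤ ∑ j' : Fin 8, ind ψ j' A :=
            Finset.single_le_sum (fun j' _ => hind0 ψ j' A) (mem_univ j)
        _ ≤ ∑ ψ' ∈ charset, ∑ j' : Fin 8, ind ψ' j' A :=
            Finset.single_le_sum
              (fun ψ' _ => Finset.sum_nonneg fun j' _ => hind0 ψ' j' A) hψmem
    -- the main chain
    have chain : ((univ.filter pred).card : ℝ) * (p^m * (1-p)^(n-m))
        ≤ 8 * n * Real.exp (-lam * s + (11/18)*lam^2*p*n) := by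
      have e1 : ∑ A ∈ univ.filter pred, w A
          = ((univ.filter pred).card : ℝ) * (p^m*(1-p)^(n-m)) := by
        rw [Finset.sum_congr rfl (g := fun _ => p^m*(1-p)^(n-m)) ?_]
        · rw [Finset.sum_const, nsmul_eq_mul]
        · intro A hA
          have hAc : A.card = m := ((Finset.mem_filter.mp hA).2).1
          rw [hw]
          dsimp only
          rw [hAc]
      calc ((univ.filter pred).card : ℝ) * (p^m * (1-p)^(n-m))
          = ∑ A ∈ univ.filter pred, w A := e1.symm
        _ ≤ ∑ A ∈ univ.filter pred, (∑ ψ ∈ charset, ∑ j : Fin 8, ind ψ j A) * w A :=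
            Finset.sum_le_sum fun A hA =>
              le_mul_of_one_le_left (hw0 A) (hone A (Finset.mem_filter.mp hA).2)
        _ ≤ ∑ A : Finset G, (∑ ψ ∈ charset, ∑ j : Fin 8, ind ψ j A) * w A :=
            Finset.sum_le_sum_of_subset_of_nonneg (Finset.subset_univ _)
              (fun A _ _ => mul_nonneg
                (Finset.sum_nonneg fun ψ _ => Finset.sum_nonneg fun j _ => hind0 ψ j A)
                (hw0 A))
        _ = ∑ ψ ∈ charset, ∑ j : Fin 8, ∑ A : Finset G, ind ψ j A * w A := by
            rw [Finset.sum_congr rfl (g := fun A => ∑ ψ ∈ charset, ∑ j : Fin 8, (ind ψ j A * w A))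
              (fun A _ => by
                rw [Finset.sum_mul]
                exact Finset.sum_congr rfl fun ψ _ => by rw [Finset.sum_mul])]
            rw [Finset.sum_comm]
            exact Finset.sum_congr rfl fun ψ _ => Finset.sum_comm
        _ ≤ ∑ ψ ∈ charset, ∑ _j : Fin 8, Real.exp (-lam * s + (11/18)*lam^2*p*n) := by
            apply Finset.sum_le_sum
            intro ψ hψmem
            apply Finset.sum_le_sum
            intro j _
            have hψ0 : ψ ≠ 0 := (Finset.mem_filter.mp hψmem).2
            have ha1 : ∀ x : G, |aa ψ j x| ≤ 1 := by
              intro x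
              rw [haa]
              dsimp only
              calc |((starRingEnd ℂ) (omg j) * ψ x).re|
                  ≤ ‖(starRingEnd ℂ) (omg j) * ψ x‖ := Complex.abs_re_le_norm _
                _ = ‖(starRingEnd ℂ) (omg j)‖ * ‖ψ x‖ := norm_mul _ _
                _ = 1 := by
                    rw [Complex.norm_conj]
                    rw [omg, Complex.norm_exp_ofReal_mul_I]
                    have : ‖ψ x‖ = ‖ψ x‖ := rfl
                    rw [this, ψ.norm_apply x, one_mul]
            have ha0 : ∑ x : G, aa ψ j x = 0 := by
              rw [haa]
              dsimp only
              rw [← Complex.re_sum, ← Finset.mul_sum,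
                AddChar.sum_eq_zero_iff_ne_zero.mpr hψ0, mul_zero, Complex.zero_re]
            have hcs := chernoff_sum (aa ψ j) ha1 ha0 p lam s hp0 hp1 hlam0 hlam
            rw [← hn_def] at hcs
            exact hcs
        _ = (charset.card : ℝ) * (8 * Real.exp (-lam * s + (11/18)*lam^2*p*n)) := by
            rw [Finset.sum_const, Finset.sum_const, Finset.card_univ, Fintype.card_fin,
              nsmul_eq_mul, nsmul_eq_mul]
            push_cast
            ring
        _ ≤ 8 * n * Real.exp (-lam * s + (11/18)*lam^2*p*n) := by
            have hcs_le : (charset.card : ℝ) ≤ n := by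
              have h1 : charset.card ≤ Fintype.card (AddChar G ℂ) := by
                rw [← Finset.card_univ]
                exact Finset.card_filter_le _ _
              have h2 : Fintype.card (AddChar G ℂ) ≤ n := by
                rw [hn_def]
                exact AddChar.card_addChar_le G ℂ
              exact_mod_cast h1.trans h2
            have hexp0 : (0:ℝ) ≤ 8 * Real.exp (-lam * s + (11/18)*lam^2*p*n) := by positivity
            calc (charset.card : ℝ) * (8 * Real.exp (-lam * s + (11/18)*lam^2*p*n))
                ≤ (n:ℝ) * (8 * Real.exp (-lam * s + (11/18)*lam^2*p*n)) :=
                  mul_le_mul_of_nonneg_right hcs_le hexp0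
              _ = 8 * n * Real.exp (-lam * s + (11/18)*lam^2*p*n) := by ring
    -- exponent bound
    have hEbound : Real.exp (-lam * s + (11/18)*lam^2*p*n) ≤ (n:ℝ) ^ (-(2+ε) : ℝ) := by
      have hpn : p * n = m := by rw [hp_def]; field_simp
      have ht2 : t^2 = 8*(1+ε)*D*m := by
        rw [ht_def, mul_pow, Real.sq_sqrt (by positivity)]
        ring
      have hmne : (m:ℝ) ≠ 0 := ne_of_gt hmR
      have hE : -lam * s + (11/18)*lam^2*p*n
          = (1+ε)*D*(11/9 - 4*Real.cos (π/8)) := by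
        rw [hlam_def, hs_def]
        exact expident t m D ε _ p n hmne ht2 hpn
      rw [hE, Real.rpow_def_of_pos hnR]
      apply Real.exp_le_exp.mpr
      rw [← hD_def]
      have hcc : (0:ℝ) ≤ 4*Real.cos (π/8) - 11/9 - 2 := by linarith
      have h1 : (0:ℝ) ≤ (1+ε) * (4*Real.cos (π/8) - 11/9 - 2) :=
        mul_nonneg (by linarith) hcc
      have h0 : (0:ℝ) ≤ D * ((1+ε)*(4*Real.cos (π/8) - 11/9 - 2) + ε) :=
        mul_nonneg hD (by linarith)
      have e : D * (-(2+ε)) - (1+ε)*D*(11/9 - 4*Real.cos (π/8))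
          = D * ((1+ε)*(4*Real.cos (π/8) - 11/9 - 2) + ε) := by ring
      have : (1+ε)*D*(11/9 - 4*Real.cos (π/8)) ≤ D * (-(2+ε)) := by linarith
      calc (1+ε)*D*(11/9 - 4*Real.cos (π/8)) ≤ D * (-(2+ε)) := this
        _ = D * -(2+ε) := by ring
    -- assemble
    have hbm := binom_mode n m hmn hn
    rw [← hp_def] at hbm
    have hM0 : (0:ℝ) ≤ ((univ.filter pred).card : ℝ) := Nat.cast_nonneg _
    have hsplit : (n:ℝ) ^ (-(2+ε) : ℝ) = (n:ℝ)^(-ε) * ((n:ℝ)^(2:ℕ))⁻¹ := by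
      rw [show (-(2+ε) : ℝ) = -ε + (-2) by ring, Real.rpow_add hnR]
      congr 1
      rw [Real.rpow_neg hnR.le]
      congr 1
      rw [← Real.rpow_natCast (n:ℝ) 2]
      norm_num
    have h1n : (1:ℝ) ≤ n := by exact_mod_cast hn
    calc (Nat.card {A : Finset G // pred A} : ℝ)
        = ((univ.filter pred).card : ℝ) := hcard_eq
      _ = ((univ.filter pred).card : ℝ) * 1 := (mul_one _).symm
      _ ≤ ((univ.filter pred).card : ℝ) *
            (((n:ℝ)+1) * (n.choose m) * p^m * (1-p)^(n-m)) :=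
          mul_le_mul_of_nonneg_left hbm hM0
      _ = (((n:ℝ)+1) * (n.choose m)) *
            (((univ.filter pred).card : ℝ) * (p^m * (1-p)^(n-m))) := by ring
      _ ≤ (((n:ℝ)+1) * (n.choose m)) * (8 * n * (n:ℝ) ^ (-(2+ε) : ℝ)) := by
          apply mul_le_mul_of_nonneg_left _ (by positivity)
          calc ((univ.filter pred).card : ℝ) * (p^m * (1-p)^(n-m))
              ≤ 8 * n * Real.exp (-lam * s + (11/18)*lam^2*p*n) := chain
            _ ≤ 8 * n * (n:ℝ) ^ (-(2+ε) : ℝ) :=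
                mul_le_mul_of_nonneg_left hEbound (by positivity)
      _ ≤ 16 * (n:ℝ)^(-ε) * (n.choose m) := by
          rw [hsplit]
          have key : ((n:ℝ)+1) * (8*n*(((n:ℝ)^(2:ℕ))⁻¹)) ≤ 16 := by
            have hn2 : (0:ℝ) < (n:ℝ)^(2:ℕ) := by positivity
            rw [show ((n:ℝ)+1) * (8*n*(((n:ℝ)^(2:ℕ))⁻¹)) = (8*n*((n:ℝ)+1))/(n:ℝ)^(2:ℕ) by ring,
              div_le_iff₀ hn2]
            nlinarith
          calc (((n:ℝ)+1) * (n.choose m)) * (8 * n * ((n:ℝ)^(-ε) * (((n:ℝ)^(2:ℕ))⁻¹)))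
              = (((n:ℝ)+1) * (8*n*(((n:ℝ)^(2:ℕ))⁻¹))) * ((n:ℝ)^(-ε) * (n.choose m)) := by
                ring
            _ ≤ 16 * ((n:ℝ)^(-ε) * (n.choose m)) :=
                mul_le_mul_of_nonneg_right key (by positivity)
            _ = 16 * (n:ℝ)^(-ε) * (n.choose m) := by ring

lemma complAbs {G : Type*} [AddCommGroup G] [Fintype G] [DecidableEq G]
    (A : Finset G) (χ : AddChar G Circle) (hχ : χ ≠ 1) :
    ‖fourierCoeffOfSet G Aᶜ χ‖ = ‖fourierCoeffOfSet G A χ‖ := by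
  have hψ0 : AddChar.circleEquivComplex χ ≠ 0 := by
    intro h
    apply hχ
    have h0 : (AddChar.circleEquivComplex (α := G)) 0 = 0 := map_zero _
    rw [← h0] at h
    have h2 := AddChar.circleEquivComplex.injective h
    rw [h2]
    rfl
  have hsum0 : (∑ x : G, ((χ x : ℂ))) = 0 :=
    AddChar.sum_eq_zero_iff_ne_zero.mpr hψ0
  have hnum : (∑ x : G, (if x ∈ Aᶜ then (1:ℂ) else 0) * χ x)
      = - (∑ x : G, (if x ∈ A then (1:ℂ) else 0) * χ x) := by
    have hpt : ∀ x : G, (if x ∈ Aᶜ then (1:ℂ) else 0) * χ x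
        = (χ x : ℂ) - (if x ∈ A then (1:ℂ) else 0) * χ x := by
      intro x
      by_cases hx : x ∈ A <;> simp [Finset.mem_compl, hx]
    rw [Finset.sum_congr rfl (fun x _ => hpt x), Finset.sum_sub_distrib, hsum0, zero_sub]
  rw [fourierCoeffOfSet, fourierCoeffOfSet, hnum, neg_div, norm_neg]


/-- Hayes's theorem: for every `ε > 0`, for all but an `O(|G|^{-ε})` fraction of the
`m`-element subsets `A` of a finite abelian group `G`, every non-principal Fourier
coefficient of `1_A` is at most `(2/|G|)·√(2(1+ε)·ln|G|·m')` in absolute value,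
where `m' = min(m, |G| - m)`. -/
theorem stmt4 :
    ∀ ε : ℝ, 0 < ε → ∃ K : ℝ, ∃ N : ℕ,
      ∀ (G : Type*) [AddCommGroup G] [Fintype G] [DecidableEq G],
        N ≤ Fintype.card G →
        ∀ m : ℕ, m ≤ Fintype.card G →
          (Nat.card {A : Finset G // A.card = m ∧
              ∃ χ : AddChar G Circle, χ ≠ 1 ∧
                (2 / (Fintype.card G : ℝ)) *
                    Real.sqrt (2 * (1 + ε) * Real.log (Fintype.card G) *
                      (min m (Fintype.card G - m))) <
                  ‖fourierCoeffOfSet G A χ‖} : ℝ) ≤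
            K * (Fintype.card G : ℝ) ^ (-ε) * (Nat.choose (Fintype.card G) m) := by
  intro ε hε
  refine ⟨16, 0, ?_⟩
  intro G _ _ _ _hN m hm
  rcases le_or_gt (2*m) (Fintype.card G) with h2 | h2
  · exact mainlem ε hε m h2
  · classical
    set n := Fintype.card G with hn_def
    have hkey := mainlem (G := G) ε hε (n - m) (by omega)
    have hmin1 : min m (n - m) = n - m := min_eq_right (by omega)
    have hmin2 : min (n-m) (n - (n-m)) = n - m := by
      rw [Nat.sub_sub_self hm]
      exact min_eq_left (by omega)
    have hchoose : n.choose (n-m) = n.choose m := Nat.choose_symm hm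
    have hiff : ∀ A : Finset G,
        (A.card = m ∧ ∃ χ : AddChar G Circle, χ ≠ 1 ∧
          (2 / (n : ℝ)) * Real.sqrt (2 * (1 + ε) * Real.log n *
            ((min m (n - m) : ℕ) : ℝ)) < ‖fourierCoeffOfSet G A χ‖)
        ↔ (Aᶜ.card = n - m ∧ ∃ χ : AddChar G Circle, χ ≠ 1 ∧
          (2 / (n : ℝ)) * Real.sqrt (2 * (1 + ε) * Real.log n *
            ((min (n-m) (n - (n-m)) : ℕ) : ℝ)) < ‖fourierCoeffOfSet G Aᶜ χ‖) := by
      intro A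
      rw [hmin1, hmin2]
      constructor
      · rintro ⟨hc, χ, hχ, hlt⟩
        refine ⟨by rw [Finset.card_compl, hc], χ, hχ, ?_⟩
        rw [complAbs A χ hχ]
        exact hlt
      · rintro ⟨hc, χ, hχ, hlt⟩
        have hc' : A.card = m := by
          have h1 := Finset.card_compl (s := A)
          rw [← hn_def] at h1
          have h2 : A.card ≤ n := by rw [hn_def]; exact Finset.card_le_univ A
          omega
        refine ⟨hc', χ, hχ, ?_⟩
        rw [complAbs A χ hχ] at hlt
        exact hlt
    have hcardeq : Nat.card {A : Finset G // A.card = m ∧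
        ∃ χ : AddChar G Circle, χ ≠ 1 ∧
          (2 / (n : ℝ)) * Real.sqrt (2 * (1 + ε) * Real.log n *
            ((min m (n - m) : ℕ) : ℝ)) < ‖fourierCoeffOfSet G A χ‖}
        = Nat.card {A : Finset G // A.card = n - m ∧
        ∃ χ : AddChar G Circle, χ ≠ 1 ∧
          (2 / (n : ℝ)) * Real.sqrt (2 * (1 + ε) * Real.log n *
            ((min (n-m) (n - (n-m)) : ℕ) : ℝ)) < ‖fourierCoeffOfSet G A χ‖} := by
      apply Nat.card_congr
      refine ⟨fun ⟨A, hA⟩ => ⟨Aᶜ, (hiff A).mp hA⟩,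
        fun ⟨B, hB⟩ => ⟨Bᶜ, ?_⟩, ?_, ?_⟩
      · apply (hiff Bᶜ).mpr
        rwa [compl_compl]
      · rintro ⟨A, hA⟩
        simp [compl_compl]
      · rintro ⟨B, hB⟩
        simp [compl_compl]
    rw [hcardeq]
    rw [← hchoose]
    exact hkey
end
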